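/- Any straight-line XOR circuit encoding the systematic [2^k, k+1] punctured Hadamard code uses at least 2^k − 2 XOR gates, for k ≥ 2. -/

import Mathlib

/-- The standard basis of `F_2^n`, i.e. the linear forms given by the `n` input bits. -/
def inputForms (n : ℕ) : List (Fin n → ZMod 2) :=
  (List.finRange n).map (fun i => fun t => if t = i then (1 : ZMod 2) else 0)

/-- The list of all values (linear forms over the `n` input bits) computed by a
straight-line XOR program: the inputs, followed by the outputs of the 2-input XOR
gates, each gate referring to two previously computed values by index. -/
def values (n : ℕ) (gates : List (ℕ × ℕ)) : List (Fin n → ZMod 2) :=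
  gates.foldl (fun acc g => acc ++ [acc.getD g.1 0 + acc.getD g.2 0]) (inputForms n)

/-- Validity of a straight-line program: each gate reads only previously computed
values (inputs or earlier gate outputs). -/
def ValidGates (n : ℕ) (gates : List (ℕ × ℕ)) : Prop :=
  ∀ i < gates.length, (gates.getD i (0, 0)).1 < n + i ∧ (gates.getD i (0, 0)).2 < n + i

/-- The outputs of the gates (the computed values other than the inputs). -/
def gateOutputs (n : ℕ) (gates : List (ℕ × ℕ)) : List (Fin n → ZMod 2) :=
  (values n gates).drop n

/-- Hamming weight of a linear form (vector of coefficients over `F_2`). -/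
def wt {n : ℕ} (v : Fin n → ZMod 2) : ℕ :=
  (Finset.univ.filter fun i => v i ≠ 0).card

namespace S17

def bV {n : ℕ} (i : Fin n) : Fin n → ZMod 2 := fun t => if t = i then 1 else 0

def par {n : ℕ} (v : Fin n → ZMod 2) : ZMod 2 := ∑ i, v i

lemma par_add {n} (a b : Fin n → ZMod 2) : par (a + b) = par a + par b := by
  simp [par, Finset.sum_add_distrib]

lemma par_bV {n} (i : Fin n) : par (bV i) = 1 := by
  simp [par, bV]

lemma wt_bV {n} (i : Fin n) : wt (bV i) = 1 := by
  have : (Finset.univ.filter fun t => bV i t ≠ 0) = {i} := by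
    ext t
    by_cases h : t = i <;> simp [bV, h]
  simp [wt, this]

lemma wt_zero {n} : wt (0 : Fin n → ZMod 2) = 0 := by
  simp [wt]

lemma zmod2_cases (x : ZMod 2) : x = 0 ∨ x = 1 := by
  revert x; decide

lemma par_eq_wt {n} (v : Fin n → ZMod 2) : par v = (wt v : ZMod 2) := by
  classical
  rw [par, wt]
  rw [← Finset.sum_filter_ne_zero Finset.univ]
  rw [Finset.sum_congr rfl (fun i hi => ?_), Finset.sum_const, nsmul_eq_mul, mul_one]
  rcases zmod2_cases (v i) with h | h
  · simp only [Finset.mem_filter] at hi; exact absurd h hi.2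
  · exact h

lemma odd_wt_iff {n} (v : Fin n → ZMod 2) : Odd (wt v) ↔ par v = 1 := by
  rw [par_eq_wt, show ((wt v : ZMod 2)) = ((wt v % 2 : ℕ) : ZMod 2) by
    rw [ZMod.natCast_mod], Nat.odd_iff]
  have h2 : wt v % 2 = 0 ∨ wt v % 2 = 1 := by omega
  rcases h2 with h | h <;> rw [h] <;> simp <;> omega

end S17
namespace S17

lemma wt_eq_one {n} (v : Fin n → ZMod 2) (h : wt v = 1) : ∃ i, v = bV i := by
  classical
  rw [wt, Finset.card_eq_one] at h
  obtain ⟨i, hi⟩ := h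
  refine ⟨i, funext fun t => ?_⟩
  by_cases ht : t = i
  · subst ht
    have : t ∈ Finset.univ.filter fun s => v s ≠ 0 := by rw [hi]; simp
    simp only [Finset.mem_filter] at this
    rcases zmod2_cases (v t) with h | h
    · exact absurd h this.2
    · simp [bV, h]
  · have : t ∉ Finset.univ.filter fun s => v s ≠ 0 := by rw [hi]; simp [ht]
    simp only [Finset.mem_filter, Finset.mem_univ, true_and, not_not] at this
    simp [bV, ht, this]

variable {n : ℕ}

/-- merge coordinates `i` and `j` (delete coordinate `j`, add it into `i`). -/
def Lm (j i : Fin (n+1)) (v : Fin (n+1) → ZMod 2) : Fin n → ZMod 2 :=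
  fun s => v (j.succAbove s) + if j.succAbove s = i then v j else 0

lemma Lm_add (j i : Fin (n+1)) (a b : Fin (n+1) → ZMod 2) :
    Lm j i (a + b) = Lm j i a + Lm j i b := by
  funext s
  simp only [Lm, Pi.add_apply]
  split <;> ring

lemma Lm_zero (j i : Fin (n+1)) : Lm j i (0 : Fin (n+1) → ZMod 2) = 0 := by
  funext s; simp [Lm]

lemma par_Lm (j i : Fin (n+1)) (hij : i ≠ j) (v : Fin (n+1) → ZMod 2) :
    par (Lm j i v) = par v := by
  classical
  obtain ⟨si, hsi⟩ := Fin.exists_succAbove_eq hij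
  have h1 : ∑ s, (if j.succAbove s = i then v j else 0) = v j := by
    rw [Finset.sum_congr rfl (fun s _ => ?_), Finset.sum_ite_eq' Finset.univ si (fun _ => v j)]
    · simp
    · congr 1
      simp [← hsi, Fin.succAbove_right_injective.eq_iff, eq_comm]
  have h2 : (∑ s, v (j.succAbove s)) + v j = par v := by
    rw [par, Fin.sum_univ_succAbove v j]; ring
  simp only [par, Lm, Finset.sum_add_distrib, h1]
  exact h2

lemma Lm_bV (j i : Fin (n+1)) (hij : i ≠ j) (m : Fin (n+1)) :
    ∃ s, Lm j i (bV m) = bV s := by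
  classical
  obtain ⟨si, hsi⟩ := Fin.exists_succAbove_eq hij
  by_cases hm : m = j
  · refine ⟨si, funext fun s => ?_⟩
    subst hm
    simp only [Lm, bV]
    rw [if_neg (Fin.succAbove_ne m s)]
    by_cases h : s = si
    · subst h; rw [if_pos hsi]; simp
    · rw [if_neg, if_neg h]; simp
      rw [← hsi]; exact fun hc => h (Fin.succAbove_right_injective hc)
  · obtain ⟨s0, hs0⟩ := Fin.exists_succAbove_eq hm
    refine ⟨s0, funext fun s => ?_⟩
    simp only [Lm, bV]
    have hji : (if j.succAbove s = i then (if (j:Fin (n+1)) = m then (1:ZMod 2) else 0) else 0) = 0 := by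
      split
      · rw [if_neg (Ne.symm hm)]
      · rfl
    rw [hji, add_zero]
    by_cases h : s = s0
    · subst h; rw [if_pos hs0, if_pos rfl]
    · rw [if_neg, if_neg h]
      rw [← hs0]; exact fun hc => h (Fin.succAbove_right_injective hc)

/-- lift of a vector in `F_2^n` to `F_2^(n+1)` with 0 at coordinate `j`. -/
noncomputable def liftF (j : Fin (n+1)) (w : Fin n → ZMod 2) : Fin (n+1) → ZMod 2 :=
  fun m => if h : ∃ s, j.succAbove s = m then w h.choose else 0

lemma liftF_succAbove (j : Fin (n+1)) (w : Fin n → ZMod 2) (s : Fin n) :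
    liftF j w (j.succAbove s) = w s := by
  have h : ∃ s', j.succAbove s' = j.succAbove s := ⟨s, rfl⟩
  rw [liftF, dif_pos h]
  congr 1
  exact Fin.succAbove_right_injective h.choose_spec

lemma liftF_j (j : Fin (n+1)) (w : Fin n → ZMod 2) : liftF j w j = 0 := by
  rw [liftF, dif_neg]
  rintro ⟨s, hs⟩
  exact Fin.succAbove_ne j s hs

lemma Lm_liftF (j i : Fin (n+1)) (w : Fin n → ZMod 2) : Lm j i (liftF j w) = w := by
  funext s
  simp only [Lm, liftF_succAbove, liftF_j]
  split <;> ring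

lemma wt_liftF (j : Fin (n+1)) (w : Fin n → ZMod 2) : wt (liftF j w) = wt w := by
  classical
  rw [wt, wt, show (Finset.univ.filter fun m => liftF j w m ≠ 0)
      = (Finset.univ.filter fun s => w s ≠ 0).image j.succAbove from ?_]
  · exact Finset.card_image_of_injective _ Fin.succAbove_right_injective
  · ext m
    simp only [Finset.mem_filter, Finset.mem_univ, true_and, Finset.mem_image]
    by_cases hm : m = j
    · subst hm
      simp only [liftF_j, ne_eq, not_true_eq_false, false_iff]
      rintro ⟨s, -, hs⟩
      exact Fin.succAbove_ne m s hs
    · obtain ⟨s0, hs0⟩ := Fin.exists_succAbove_eq hm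
      subst hs0
      rw [liftF_succAbove]
      constructor
      · exact fun h => ⟨s0, h, rfl⟩
      · rintro ⟨s, hs, he⟩
        rwa [Fin.succAbove_right_injective he] at hs

end S17
namespace S17

def Good (N : ℕ) (l : List (Fin N → ZMod 2)) : Prop :=
  ∀ t, t < l.length →
    (∃ i, l.getD t 0 = bV i) ∨
    ∃ a b, a < t ∧ b < t ∧ l.getD t 0 = l.getD a 0 + l.getD b 0

lemma claim {N : ℕ} (l : List (Fin N → ZMod 2)) (hg : Good N l) :
    ∀ t, t < l.length →
    (∀ s, s ≤ t → ∀ i j : Fin N, i ≠ j → l.getD s 0 ≠ bV i + bV j) →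
    (l.getD t 0 = 0 ∨ ∃ i, l.getD t 0 = bV i) := by
  intro t
  induction t using Nat.strong_induction_on with
  | _ t ih =>
    intro ht hw
    rcases hg t ht with ⟨i, hi⟩ | ⟨a, b, ha, hb, hab⟩
    · exact Or.inr ⟨i, hi⟩
    · have hwa : ∀ s, s ≤ a → ∀ i j : Fin N, i ≠ j → l.getD s 0 ≠ bV i + bV j :=
        fun s hs => hw s (hs.trans ha.le)
      have hwb : ∀ s, s ≤ b → ∀ i j : Fin N, i ≠ j → l.getD s 0 ≠ bV i + bV j :=
        fun s hs => hw s (hs.trans hb.le)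
      rcases ih a ha (ha.trans ht) hwa with h0a | ⟨i, hia⟩ <;>
        rcases ih b hb (hb.trans ht) hwb with h0b | ⟨j, hjb⟩
      · left; rw [hab, h0a, h0b, add_zero]
      · right; exact ⟨j, by rw [hab, h0a, hjb, zero_add]⟩
      · right; exact ⟨i, by rw [hab, h0b, hia, add_zero]⟩
      · by_cases hij : i = j
        · left
          rw [hab, hia, hjb, hij]
          funext t
          by_cases h : t = j <;> simp [bV, h] <;> decide
        · exact absurd (by rw [hab, hia, hjb]) (hw t le_rfl i j hij)

lemma bV_add_ne_zero {N : ℕ} {i j : Fin N} (hij : i ≠ j) : bV i + bV j ≠ (0 : Fin N → ZMod 2) := by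
  intro h
  have := congrFun h i
  simp [bV, hij] at this

/-- the core counting lemma -/
lemma core : ∀ N : ℕ, 2 ≤ N → ∀ l : List (Fin N → ZMod 2), Good N l →
    (∀ v : Fin N → ZMod 2, Odd (wt v) → 2 ≤ wt v → v ∈ l) →
    N - 2 ≤ l.countP (fun v => decide (v ≠ 0 ∧ par v = 0)) := by
  intro N hN
  induction N, hN using Nat.le_induction with
  | base => intro l _ _; simp
  | succ n hn ih =>
    intro l hg hcov
    -- dimension n+1 ≥ 3
    have h3 : 3 ≤ n + 1 := by omega
    -- a weight-3 vector
    set a : Fin (n+1) := ⟨0, by omega⟩ with ha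
    set b : Fin (n+1) := ⟨1, by omega⟩ with hb
    set c : Fin (n+1) := ⟨2, by omega⟩ with hc
    have hab : a ≠ b := by simp [ha, hb, Fin.ext_iff]
    have hac : a ≠ c := by simp [ha, hc, Fin.ext_iff]
    have hbc : b ≠ c := by simp [hb, hc, Fin.ext_iff]
    set v0 : Fin (n+1) → ZMod 2 := bV a + bV b + bV c with hv0
    have hwt : wt v0 = 3 := by
      have hfil : (Finset.univ.filter fun t => v0 t ≠ 0) = {a, b, c} := by
        ext t
        simp only [Finset.mem_filter, Finset.mem_univ, true_and, Finset.mem_insert,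
          Finset.mem_singleton]
        by_cases h1 : t = a
        · subst h1; simp [hv0, bV, hab, hac]
        · by_cases h2 : t = b
          · subst h2; simp [hv0, bV, Ne.symm hab, hbc]
          · by_cases h3 : t = c
            · subst h3; simp [hv0, bV, Ne.symm hac, Ne.symm hbc]
            · simp [hv0, bV, h1, h2, h3]
      rw [wt, hfil]
      rw [Finset.card_insert_of_notMem (by simp [hab, hac]),
        Finset.card_insert_of_notMem (by simp [hbc]), Finset.card_singleton]
    have hv0mem : v0 ∈ l := hcov v0 (by rw [hwt]; exact ⟨1, rfl⟩) (by omega)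
    -- find a gate computing bV i + bV j with i ≠ j
    obtain ⟨t0, ht0, hget⟩ := List.getElem_of_mem hv0mem
    have hgetD : l.getD t0 0 = v0 := by rw [List.getD_eq_getElem l 0 ht0, hget]
    have hex : ∃ s, s ≤ t0 ∧ ∃ i j : Fin (n+1), i ≠ j ∧ l.getD s 0 = bV i + bV j := by
      by_contra hcon
      push_neg at hcon
      rcases claim l hg t0 ht0 (fun s hs i j hij => hcon s hs i j hij) with h0 | ⟨i, hi⟩
      · rw [hgetD] at h0; rw [h0, wt_zero] at hwt; omega
      · rw [hgetD] at hi; rw [hi, wt_bV] at hwt; omega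
    obtain ⟨s0, hs0t, i, j, hij, hs0⟩ := hex
    have hs0len : s0 < l.length := by
      by_contra hc
      rw [List.getD_eq_default l 0 (le_of_not_gt hc)] at hs0
      exact bV_add_ne_zero hij hs0.symm
    have hemem : bV i + bV j ∈ l := by
      rw [← hs0, List.getD_eq_getElem l 0 hs0len]
      exact List.getElem_mem _
    -- the merged list
    set L : (Fin (n+1) → ZMod 2) → (Fin n → ZMod 2) := Lm j i with hL
    set q : (Fin (n+1) → ZMod 2) → Bool := fun v => decide (v ≠ 0 ∧ par v = 0) with hq
    set q' : (Fin n → ZMod 2) → Bool := fun v => decide (v ≠ 0 ∧ par v = 0) with hq'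
    have hgetmap : ∀ t, t < l.length → (l.map L).getD t 0 = L (l.getD t 0) := by
      intro t ht
      rw [List.getD_eq_getElem _ _ (by simpa using ht), List.getD_eq_getElem _ _ ht,
        List.getElem_map]
    have hgood' : Good n (l.map L) := by
      intro t ht
      rw [List.length_map] at ht
      rcases hg t ht with ⟨m, hm⟩ | ⟨a, b2, ha, hb2, hab⟩
      · left
        obtain ⟨s, hs⟩ := Lm_bV j i hij m
        exact ⟨s, by rw [hgetmap t ht, hm]; exact hs⟩
      · right
        refine ⟨a, b2, ha, hb2, ?_⟩
        rw [hgetmap t ht, hgetmap a (ha.trans ht), hgetmap b2 (hb2.trans ht), hab]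
        exact Lm_add j i _ _
    have hcov' : ∀ w : Fin n → ZMod 2, Odd (wt w) → 2 ≤ wt w → w ∈ l.map L := by
      intro w hodd hw2
      have h1 : liftF j w ∈ l := by
        apply hcov <;> rw [wt_liftF]
        · exact hodd
        · exact hw2
      have := List.mem_map_of_mem (f := L) h1
      rwa [hL, Lm_liftF] at this
    have hIH := ih (l.map L) hgood' hcov'
    -- counting
    obtain ⟨u1, u2, hl⟩ := List.append_of_mem hemem
    have hLe : L (bV i + bV j) = 0 := by
      funext s
      simp only [hL, Lm, Pi.add_apply, bV]
      rw [if_neg (Fin.succAbove_ne j s)]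
      by_cases h : j.succAbove s = i
      · simp [h, Ne.symm hij]
        decide
      · simp [h]
    have hqe : q (bV i + bV j) = true := by
      rw [hq]
      simp only [decide_eq_true_eq]
      refine ⟨bV_add_ne_zero hij, ?_⟩
      rw [par_add, par_bV, par_bV]
      decide
    have hmono : ∀ u : List (Fin (n+1) → ZMod 2), (u.map L).countP q' ≤ u.countP q := by
      intro u
      rw [List.countP_map]
      apply List.countP_mono_left
      intro x _ hx
      simp only [Function.comp_apply, hq', decide_eq_true_eq] at hx
      simp only [hq, decide_eq_true_eq]
      refine ⟨fun h0 => hx.1 (by rw [h0, hL, Lm_zero]), ?_⟩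
      rw [← par_Lm j i hij x]
      exact hx.2
    have hccl : l.countP q = u1.countP q + u2.countP q + 1 := by
      rw [hl, List.countP_append, List.countP_cons, hqe]
      simp
      omega
    have hccm : (l.map L).countP q' = (u1.map L).countP q' + (u2.map L).countP q' := by
      rw [hl]
      simp only [List.map_append, List.map_cons]
      rw [List.countP_append, List.countP_cons, hLe]
      have : q' 0 = false := by simp [hq']
      rw [this]
      simp
    have h1 := hmono u1
    have h2 := hmono u2
    omega

end S17
namespace S17

lemma length_inputForms (n : ℕ) : (inputForms n).length = n := by
  simp [inputForms]

lemma getD_inputForms (n : ℕ) (t : ℕ) (ht : t < n) :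
    (inputForms n).getD t 0 = bV ⟨t, ht⟩ := by
  rw [List.getD_eq_getElem _ _ (by simpa [length_inputForms] using ht)]
  simp [inputForms, bV, List.getElem_finRange]
  rfl

lemma length_values (n : ℕ) (gates : List (ℕ × ℕ)) :
    (values n gates).length = n + gates.length := by
  rw [values]
  have : ∀ (gs : List (ℕ × ℕ)) (acc : List (Fin n → ZMod 2)),
      (gs.foldl (fun acc g => acc ++ [acc.getD g.1 0 + acc.getD g.2 0]) acc).length
        = acc.length + gs.length := by
    intro gs
    induction gs with
    | nil => simp
    | cons g gs ihg => intro acc; rw [List.foldl_cons, ihg]; simp; omega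
  rw [this, length_inputForms]

lemma values_append (n : ℕ) (gs : List (ℕ × ℕ)) (g : ℕ × ℕ) :
    values n (gs ++ [g]) = values n gs ++
      [(values n gs).getD g.1 0 + (values n gs).getD g.2 0] := by
  rw [values, values, List.foldl_append]
  rfl

lemma good_values (n : ℕ) (gates : List (ℕ × ℕ)) (hv : ValidGates n gates) :
    Good n (values n gates) := by
  induction gates using List.reverseRecOn with
  | nil =>
    intro t ht
    rw [show values n [] = inputForms n from rfl] at ht ⊢
    rw [length_inputForms] at ht
    exact Or.inl ⟨⟨t, ht⟩, getD_inputForms n t ht⟩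
  | append_singleton gs g ihg =>
    have hvgs : ValidGates n gs := by
      intro i hi
      have := hv i (by simp; omega)
      rwa [List.getD_append _ _ _ _ hi] at this
    have hgood := ihg hvgs
    intro t ht
    rw [values_append] at ht ⊢
    rw [List.length_append, List.length_cons, List.length_nil] at ht
    set V := values n gs with hV
    by_cases htV : t < V.length
    · have hgd : ∀ s, s < V.length → (V ++ [V.getD g.1 0 + V.getD g.2 0]).getD s 0 = V.getD s 0 :=
        fun s hs => List.getD_append _ _ _ _ hs
      rcases hgood t htV with ⟨i, hi⟩ | ⟨a, b, ha, hb, hab⟩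
      · exact Or.inl ⟨i, by rw [hgd t htV, hi]⟩
      · exact Or.inr ⟨a, b, ha, hb, by
          rw [hgd t htV, hgd a (ha.trans htV), hgd b (hb.trans htV), hab]⟩
    · have htl : t = V.length := by omega
      right
      have hg2 := hv gs.length (by simp)
      have hgg : (gs ++ [g]).getD gs.length (0,0) = g := by
        rw [List.getD_eq_getElem _ _ (by simp)]
        simp
      rw [hgg] at hg2
      have hVlen : V.length = n + gs.length := length_values n gs
      refine ⟨g.1, g.2, by omega, by omega, ?_⟩
      have hx : (V ++ [V.getD g.1 0 + V.getD g.2 0]).getD t 0 = V.getD g.1 0 + V.getD g.2 0 := by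
        rw [htl, List.getD_eq_getElem _ _ (by simp)]
        simp
      rw [hx, List.getD_append _ _ _ _ (by omega), List.getD_append _ _ _ _ (by omega)]

end S17
namespace S17

lemma card_odd (m : ℕ) :
    (Finset.univ.filter fun v : Fin (m+1) → ZMod 2 => par v = 1).card = 2 ^ m := by
  classical
  set O := Finset.univ.filter fun v : Fin (m+1) → ZMod 2 => par v = 1 with hO
  set E := Finset.univ.filter fun v : Fin (m+1) → ZMod 2 => ¬(par v = 1) with hE
  have hcards : O.card + E.card = 2 ^ (m+1) := by
    rw [hO, hE, Finset.card_filter_add_card_filter_not]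
    rw [Finset.card_univ, Fintype.card_fun]
    simp [ZMod.card]
  have hbij : O.card = E.card := by
    have hinv : ∀ v : Fin (m+1) → ZMod 2, v + bV 0 + bV 0 = v := by
      intro v
      funext t
      simp only [Pi.add_apply]
      rcases zmod2_cases (bV 0 t) with h | h <;> rcases zmod2_cases (v t) with h2 | h2 <;>
        rw [h, h2] <;> decide
    apply Finset.card_bij' (fun v _ => v + bV 0) (fun v _ => v + bV 0) ?hi ?hj
      (fun v _ => hinv v) (fun v _ => hinv v)
    · intro v hv
      rw [hO, Finset.mem_filter] at hv
      rw [hE, Finset.mem_filter]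
      refine ⟨Finset.mem_univ _, ?_⟩
      rw [par_add, hv.2, par_bV]
      decide
    · intro v hv
      rw [hE, Finset.mem_filter] at hv
      rw [hO, Finset.mem_filter]
      refine ⟨Finset.mem_univ _, ?_⟩
      rcases zmod2_cases (par v) with h | h
      · rw [par_add, h, par_bV]; decide
      · exact absurd h hv.2
  have h2 : 2 ^ (m+1) = 2 ^ m + 2 ^ m := by ring
  omega

lemma card_targets (m : ℕ) :
    2 ^ m - (m + 1) ≤
      (Finset.univ.filter fun v : Fin (m+1) → ZMod 2 => Odd (wt v) ∧ 2 ≤ wt v).card := by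
  classical
  set T := Finset.univ.filter fun v : Fin (m+1) → ZMod 2 => Odd (wt v) ∧ 2 ≤ wt v with hT
  set B := Finset.image (bV (n := m+1)) Finset.univ with hB
  have hsub : (Finset.univ.filter fun v : Fin (m+1) → ZMod 2 => par v = 1) ⊆ T ∪ B := by
    intro v hv
    rw [Finset.mem_filter] at hv
    have hodd : Odd (wt v) := (odd_wt_iff v).mpr hv.2
    rcases Nat.lt_or_ge (wt v) 2 with h | h
    · have h1 : wt v = 1 := by
        rcases hodd with ⟨r, hr⟩; omega
      obtain ⟨i, hi⟩ := wt_eq_one v h1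
      exact Finset.mem_union_right _ (Finset.mem_image.mpr ⟨i, Finset.mem_univ _, hi.symm⟩)
    · exact Finset.mem_union_left _ (Finset.mem_filter.mpr ⟨Finset.mem_univ _, hodd, h⟩)
  have hc1 := Finset.card_le_card hsub
  have hc2 := Finset.card_union_le T B
  have hc3 : B.card ≤ m + 1 := by
    calc B.card ≤ (Finset.univ : Finset (Fin (m+1))).card := Finset.card_image_le
    _ = m + 1 := by simp
  have := card_odd m
  omega

theorem main (k : ℕ) (hk : 2 ≤ k) (gates : List (ℕ × ℕ))
    (hv : ValidGates (k + 1) gates)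
    (hcomp : ∀ v : Fin (k + 1) → ZMod 2, Odd (wt v) → 2 ≤ wt v →
      v ∈ values (k + 1) gates) :
    2 ^ k - 2 ≤ gates.length := by
  classical
  set l := values (k+1) gates with hl
  set q : (Fin (k+1) → ZMod 2) → Bool := fun v => decide (v ≠ 0 ∧ par v = 0) with hq
  set p1 : (Fin (k+1) → ZMod 2) → Bool := fun v => decide (par v = 1) with hp1
  set outs := l.drop (k+1) with houts
  have hsplit : l = inputForms (k+1) ++ outs := by
    have : ∀ (gs : List (ℕ × ℕ)) (acc : List (Fin (k+1) → ZMod 2)),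
        ∃ r, gs.foldl (fun acc g => acc ++ [acc.getD g.1 0 + acc.getD g.2 0]) acc = acc ++ r := by
      intro gs
      induction gs with
      | nil => exact fun acc => ⟨[], by simp⟩
      | cons g gs ihg =>
        intro acc
        obtain ⟨r, hr⟩ := ihg (acc ++ [acc.getD g.1 0 + acc.getD g.2 0])
        exact ⟨[acc.getD g.1 0 + acc.getD g.2 0] ++ r, by rw [List.foldl_cons, hr, List.append_assoc]⟩
    obtain ⟨r, hr⟩ := this gates (inputForms (k+1))
    have hr2 : outs = r := by
      rw [houts, hl, values, hr]
      exact List.drop_left' (length_inputForms _)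
    rw [hl, values, hr, hr2]
  have hlenl : l.length = (k+1) + gates.length := length_values _ _
  have hlenouts : outs.length = gates.length := by
    have := congrArg List.length hsplit
    rw [List.length_append, length_inputForms] at this
    omega
  -- inputs are basis vectors
  have hinput_bV : ∀ x ∈ inputForms (k+1), ∃ i, x = bV i := by
    intro x hx
    rw [inputForms, List.mem_map] at hx
    obtain ⟨i, _, hi⟩ := hx
    exact ⟨i, hi.symm⟩
  -- count of even nonzero values among outputs
  have hcore : k - 1 ≤ outs.countP q := by
    have h1 := core (k+1) (by omega) l (good_values _ gates hv) hcomp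
    have h2 : l.countP q = (inputForms (k+1)).countP q + outs.countP q := by
      rw [hsplit, List.countP_append]
    have h3 : (inputForms (k+1)).countP q = 0 := by
      rw [List.countP_eq_zero]
      intro x hx
      obtain ⟨i, hi⟩ := hinput_bV x hx
      rw [hq, hi]
      simp only [decide_eq_true_eq, not_and]
      intro _
      rw [par_bV]
      decide
    rw [hq] at h2 h3 ⊢
    omega
  -- count of odd targets among outputs
  have htarg : 2 ^ k - (k+1) ≤ outs.countP p1 := by
    have hTsub : (Finset.univ.filter fun v : Fin (k+1) → ZMod 2 => Odd (wt v) ∧ 2 ≤ wt v)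
        ⊆ (outs.filter p1).toFinset := by
      intro v hvT
      rw [Finset.mem_filter] at hvT
      obtain ⟨-, hodd, h2w⟩ := hvT
      have hvmem : v ∈ l := hcomp v hodd h2w
      have hvouts : v ∈ outs := by
        rw [hsplit] at hvmem
        rcases List.mem_append.mp hvmem with h | h
        · obtain ⟨i, hi⟩ := hinput_bV v h
          rw [hi, wt_bV] at h2w
          omega
        · exact h
      rw [List.mem_toFinset, List.mem_filter]
      refine ⟨hvouts, ?_⟩
      rw [hp1]
      simp only [decide_eq_true_eq]
      exact (odd_wt_iff v).mp hodd
    calc 2 ^ k - (k+1)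
        ≤ (Finset.univ.filter fun v : Fin (k+1) → ZMod 2 => Odd (wt v) ∧ 2 ≤ wt v).card :=
          card_targets k
      _ ≤ (outs.filter p1).toFinset.card := Finset.card_le_card hTsub
      _ ≤ (outs.filter p1).length := outs.filter p1 |>.toFinset_card_le
      _ = outs.countP p1 := List.countP_eq_length_filter.symm
  -- the two counts are disjoint
  have hdisj : outs.countP p1 + outs.countP q ≤ outs.length := by
    have h1 : outs.countP p1 ≤ outs.countP (fun a => decide ¬(q a = true)) := by
      apply List.countP_mono_left
      intro x _ hx
      rw [hp1] at hx
      simp only [decide_eq_true_eq] at hx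
      rw [hq]
      simp only [decide_eq_true_eq, not_and]
      intro _
      rw [hx]
      decide
    have h2 := List.length_eq_countP_add_countP (q) (l := outs)
    omega
  have hpow : k + 1 ≤ 2 ^ k := by
    have := Nat.lt_two_pow_self (n := k)
    omega
  omega

end S17

/-- Any straight-line XOR circuit over the `k+1` message bits (`k ≥ 2`) encoding the
systematic `[2^k, k+1]` punctured Hadamard code — i.e. computing every codeword
coordinate whose encoding column has weight `≥ 2`, the columns being exactly all
odd-weight vectors of `F_2^{k+1}` — uses at least `2^k − 2` XOR gates. -/
theorem stmt_17 (k : ℕ) (hk : 2 ≤ k) (gates : List (ℕ × ℕ))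
    (hv : ValidGates (k + 1) gates)
    (hcomp : ∀ v : Fin (k + 1) → ZMod 2, Odd (wt v) → 2 ≤ wt v →
      v ∈ values (k + 1) gates) :
    2 ^ k - 2 ≤ gates.length := by
  exact S17.main k hk gates hv hcomp
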